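/- There exists an RC layout that is optimal to the SIPP: if the SIPP instance has any feasible layout, then there is an RC layout A with W(A) ≤ b whose height H(A) equals the minimum of H over all layouts (of all dimensions) with width at most b. -/

import Mathlib

/-- A `p × q` layout: a matrix whose entries are exactly the integers `1, …, p*q`. -/
def IsLayout (p q : ℕ) (A : Fin p → Fin q → ℕ) : Prop :=
  Function.Injective (fun ij : Fin p × Fin q => A ij.1 ij.2) ∧
  (Set.range fun ij : Fin p × Fin q => A ij.1 ij.2) = Set.Icc 1 (p * q)

/-- Width of a layout with respect to side lengths `l`. -/
def layW (l : ℕ → ℕ) {p q : ℕ} (A : Fin p → Fin q → ℕ) : ℕ :=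
  ∑ j : Fin q, Finset.univ.sup fun i : Fin p => l (A i j)

/-- Height of a layout with respect to side lengths `l`. -/
def layH (l : ℕ → ℕ) {p q : ℕ} (A : Fin p → Fin q → ℕ) : ℕ :=
  ∑ i : Fin p, Finset.univ.sup fun j : Fin q => l (A i j)

/-- RC layouts: obtainable from the 1×1 base layout by add-row and add-column operations. -/
inductive IsRC : {p q : ℕ} → (Fin p → Fin q → ℕ) → Prop
  | base : IsRC (fun (_ : Fin 1) (_ : Fin 1) => 1)
  | addRow {p q : ℕ} {A : Fin p → Fin q → ℕ} (h : IsRC A) :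
      IsRC (fun (i : Fin (p + 1)) (j : Fin q) =>
        if hi : (i : ℕ) < p then A ⟨i, hi⟩ j else p * q + (j : ℕ) + 1)
  | addCol {p q : ℕ} {A : Fin p → Fin q → ℕ} (h : IsRC A) :
      IsRC (fun (i : Fin p) (j : Fin (q + 1)) =>
        if hj : (j : ℕ) < q then A i ⟨j, hj⟩ else p * q + (i : ℕ) + 1)

lemma isLayout_mem {p q : ℕ} {A : Fin p → Fin q → ℕ} (h : IsLayout p q A) (i : Fin p) (j : Fin q) :
    1 ≤ A i j ∧ A i j ≤ p * q := by
  have : A i j ∈ Set.Icc 1 (p * q) := h.2 ▸ ⟨(i, j), rfl⟩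
  exact this

lemma isLayout_surj {p q : ℕ} {A : Fin p → Fin q → ℕ} (h : IsLayout p q A) {e : ℕ}
    (h1 : 1 ≤ e) (h2 : e ≤ p * q) : ∃ ij : Fin p × Fin q, A ij.1 ij.2 = e := by
  have : e ∈ (Set.range fun ij : Fin p × Fin q => A ij.1 ij.2) := h.2 ▸ ⟨h1, h2⟩
  exact this

lemma isLayout_base : IsLayout 1 1 (fun (_ : Fin 1) (_ : Fin 1) => 1) := by
  constructor
  · intro a b _; ext <;> omega
  · ext e
    constructor
    · rintro ⟨ij, rfl⟩; exact ⟨le_refl _, by norm_num⟩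
    · rintro ⟨h1, h2⟩
      refine ⟨(0, 0), ?_⟩
      show 1 = e
      omega

lemma isLayout_addRow {p q : ℕ} {A : Fin p → Fin q → ℕ} (h : IsLayout p q A) :
    IsLayout (p + 1) q (fun (i : Fin (p + 1)) (j : Fin q) =>
      if hi : (i : ℕ) < p then A ⟨i, hi⟩ j else p * q + (j : ℕ) + 1) := by
  constructor
  · rintro ⟨i1, j1⟩ ⟨i2, j2⟩ he
    simp only at he
    by_cases h1 : (i1 : ℕ) < p <;> by_cases h2 : (i2 : ℕ) < p <;>
      simp only [h1, h2, dif_pos, dif_neg, not_false_iff] at he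
    · have := h.1 (a₁ := (⟨i1, h1⟩, j1)) (a₂ := (⟨i2, h2⟩, j2)) (by simpa using he)
      simp only [Prod.mk.injEq, Fin.mk.injEq] at this
      simp [Prod.ext_iff, Fin.ext_iff, this.1, this.2]
    · have := (isLayout_mem h ⟨i1, h1⟩ j1).2; omega
    · have := (isLayout_mem h ⟨i2, h2⟩ j2).2; omega
    · have : (j1 : ℕ) = (j2 : ℕ) := by omega
      have hi1 : (i1 : ℕ) = p := by omega
      have hi2 : (i2 : ℕ) = p := by omega
      simp [Prod.ext_iff, Fin.ext_iff, this, hi1, hi2]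
  · ext e
    constructor
    · rintro ⟨⟨i, j⟩, rfl⟩
      simp only
      by_cases hi : (i : ℕ) < p
      · simp only [hi, dif_pos]
        have := isLayout_mem h ⟨i, hi⟩ j
        constructor
        · exact this.1
        · have : p * q ≤ (p + 1) * q := by nlinarith
          omega
      · simp only [hi, dif_neg, not_false_iff]
        have hj := j.2
        constructor
        · omega
        · have : (p + 1) * q = p * q + q := by ring
          omega
    · rintro ⟨h1, h2⟩
      by_cases he : e ≤ p * q
      · obtain ⟨⟨i, j⟩, hij⟩ := isLayout_surj h h1 he
        refine ⟨(⟨i, by omega⟩, j), ?_⟩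
        simp only [dif_pos i.2]
        simpa using hij
      · have hq : (p + 1) * q = p * q + q := by ring
        refine ⟨(⟨p, by omega⟩, ⟨e - p * q - 1, by omega⟩), ?_⟩
        simp only [dif_neg (lt_irrefl p)]
        omega

lemma isLayout_addCol {p q : ℕ} {A : Fin p → Fin q → ℕ} (h : IsLayout p q A) :
    IsLayout p (q + 1) (fun (i : Fin p) (j : Fin (q + 1)) =>
      if hj : (j : ℕ) < q then A i ⟨j, hj⟩ else p * q + (i : ℕ) + 1) := by
  constructor
  · rintro ⟨i1, j1⟩ ⟨i2, j2⟩ he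
    simp only at he
    by_cases h1 : (j1 : ℕ) < q <;> by_cases h2 : (j2 : ℕ) < q <;>
      simp only [h1, h2, dif_pos, dif_neg, not_false_iff] at he
    · have := h.1 (a₁ := (i1, ⟨j1, h1⟩)) (a₂ := (i2, ⟨j2, h2⟩)) (by simpa using he)
      simp only [Prod.mk.injEq, Fin.mk.injEq] at this
      simp [Prod.ext_iff, Fin.ext_iff, this.1, this.2]
    · have := (isLayout_mem h i1 ⟨j1, h1⟩).2; omega
    · have := (isLayout_mem h i2 ⟨j2, h2⟩).2; omega
    · have : (i1 : ℕ) = (i2 : ℕ) := by omega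
      have hj1 : (j1 : ℕ) = q := by omega
      have hj2 : (j2 : ℕ) = q := by omega
      simp [Prod.ext_iff, Fin.ext_iff, this, hj1, hj2]
  · ext e
    constructor
    · rintro ⟨⟨i, j⟩, rfl⟩
      simp only
      by_cases hj : (j : ℕ) < q
      · simp only [hj, dif_pos]
        have := isLayout_mem h i ⟨j, hj⟩
        constructor
        · exact this.1
        · have : p * q ≤ p * (q + 1) := by nlinarith
          omega
      · simp only [hj, dif_neg, not_false_iff]
        have hi := i.2
        constructor
        · omega
        · have : p * (q + 1) = p * q + p := by ring
          omega
    · rintro ⟨h1, h2⟩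
      by_cases he : e ≤ p * q
      · obtain ⟨⟨i, j⟩, hij⟩ := isLayout_surj h h1 he
        refine ⟨(i, ⟨j, by omega⟩), ?_⟩
        simp only [dif_pos j.2]
        simpa using hij
      · have hq : p * (q + 1) = p * q + p := by ring
        refine ⟨(⟨e - p * q - 1, by omega⟩, ⟨q, by omega⟩), ?_⟩
        simp only [dif_neg (lt_irrefl q)]
        omega

lemma filter_card_castSucc {m : ℕ} (P : Fin (m + 1) → Prop) [DecidablePred P]
    (h : ¬ P (Fin.last m)) :
    (Finset.univ.filter P).card
      = (Finset.univ.filter (fun i : Fin m => P i.castSucc)).card := by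
  rw [← Finset.card_map ⟨Fin.castSucc, Fin.castSucc_injective m⟩]
  congr 1
  ext x
  simp only [Finset.mem_map, Finset.mem_filter, Finset.mem_univ, true_and,
    Function.Embedding.coeFn_mk]
  constructor
  · intro hx
    have hne : x ≠ Fin.last m := fun hxe => h (hxe ▸ hx)
    obtain ⟨y, rfl⟩ := Fin.exists_castSucc_eq.mpr hne
    exact ⟨y, hx, rfl⟩
  · rintro ⟨y, hy, rfl⟩; exact hy

lemma rc_build : ∀ (N p q : ℕ) (r : Fin (p + 1) → ℕ) (c : Fin (q + 1) → ℕ),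
    p + q ≤ N → StrictMono r → StrictMono c → r 0 = 1 → c 0 = 1 →
    (∀ i : Fin (p + 1),
      r i ≤ (i : ℕ) * ((Finset.univ.filter (fun j : Fin (q + 1) => c j ≤ r i)).card) + 1) →
    (∀ j : Fin (q + 1),
      c j ≤ (j : ℕ) * ((Finset.univ.filter (fun i : Fin (p + 1) => r i < c j)).card) + 1) →
    ∃ A : Fin (p + 1) → Fin (q + 1) → ℕ, IsRC A ∧ IsLayout (p + 1) (q + 1) A ∧
      (∀ i j, r i ≤ A i j) ∧ (∀ i j, c j ≤ A i j) := by
  intro N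
  induction N with
  | zero =>
    intro p q r c hN hr hc hr0 hc0 _ _
    have hp : p = 0 := by omega
    have hq : q = 0 := by omega
    subst hp; subst hq
    refine ⟨_, IsRC.base, isLayout_base, ?_, ?_⟩
    · intro i j
      have : i = 0 := Fin.fin_one_eq_zero i
      rw [this, hr0]
    · intro i j
      have : j = 0 := Fin.fin_one_eq_zero j
      rw [this, hc0]
  | succ N ih =>
    intro p q r c hN hr hc hr0 hc0 hB hC
    by_cases hcr : c (Fin.last q) ≤ r (Fin.last p)
    · -- peel a row (or base case if p = 0)
      match p, r, hr, hr0, hB, hcr, hN with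
      | 0, r, hr, hr0, hB, hcr, hN =>
        -- then c last ≤ r 0 = 1, forcing q = 0
        have hlast0 : (Fin.last 0 : Fin 1) = 0 := rfl
        rw [hlast0, hr0] at hcr
        have h1 : c (Fin.last q) = 1 :=
          le_antisymm hcr (hc0 ▸ hc.monotone (Fin.zero_le _))
        have hq : q = 0 := by
          by_contra hq0
          have : (0 : Fin (q + 1)) < Fin.last q := by
            rw [Fin.lt_iff_val_lt_val]; simp [Fin.last]; omega
          have := hc this
          omega
        subst hq
        refine ⟨_, IsRC.base, isLayout_base, ?_, ?_⟩
        · intro i j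
          have : i = 0 := Fin.fin_one_eq_zero i
          rw [this, hr0]
        · intro i j
          have : j = 0 := Fin.fin_one_eq_zero j
          rw [this, hc0]
      | p' + 1, r, hr, hr0, hB, hcr, hN =>
        set r' : Fin (p' + 1) → ℕ := fun i => r i.castSucc with hr'def
        have hr'mono : StrictMono r' := fun a b hab =>
          hr (Fin.castSucc_lt_castSucc_iff.mpr hab)
        have hr'0 : r' 0 = 1 := by
          rw [hr'def]; simpa using hr0
        have hrle : ∀ i : Fin (p' + 2), r i ≤ r (Fin.last (p' + 1)) :=
          fun i => hr.monotone (Fin.le_last i)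
        have hB' : ∀ i : Fin (p' + 1),
            r' i ≤ (i : ℕ) * ((Finset.univ.filter (fun j : Fin (q + 1) => c j ≤ r' i)).card) + 1 := by
          intro i
          have := hB i.castSucc
          simpa [hr'def] using this
        have hC' : ∀ j : Fin (q + 1),
            c j ≤ (j : ℕ) * ((Finset.univ.filter (fun i : Fin (p' + 1) => r' i < c j)).card) + 1 := by
          intro j
          have hnot : ¬ (r (Fin.last (p' + 1)) < c j) := by
            have : c j ≤ c (Fin.last q) := hc.monotone (Fin.le_last j)
            omega
          have := hC j
          rwa [filter_card_castSucc (fun i : Fin (p' + 2) => r i < c j) hnot] at this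
        obtain ⟨A, hRC, hLay, hrA, hcA⟩ :=
          ih p' q r' c (by omega) hr'mono hc hr'0 hc0 hB' hC'
        refine ⟨_, IsRC.addRow hRC, isLayout_addRow hLay, ?_, ?_⟩
        · intro i j
          by_cases hi : (i : ℕ) < p' + 1
          · simp only [dif_pos hi]
            have hieq : i = Fin.castSucc ⟨(i : ℕ), hi⟩ := Fin.ext (by simp)
            exact le_trans (le_of_eq (congrArg r hieq)) (hrA ⟨(i : ℕ), hi⟩ j)
          · simp only [dif_neg hi]
            have hile : r i ≤ r (Fin.last (p' + 1)) := hrle i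
            have hcard : ((Finset.univ.filter
                (fun j : Fin (q + 1) => c j ≤ r (Fin.last (p' + 1)))).card) ≤ q + 1 := by
              have := Finset.card_filter_le (Finset.univ : Finset (Fin (q + 1)))
                (fun j => c j ≤ r (Fin.last (p' + 1)))
              simpa using this
            have := hB (Fin.last (p' + 1))
            have hlastval : ((Fin.last (p' + 1) : Fin (p' + 2)) : ℕ) = p' + 1 := rfl
            rw [hlastval] at this
            have hbound : r (Fin.last (p' + 1)) ≤ (p' + 1) * (q + 1) + 1 := by
              calc r (Fin.last (p' + 1)) ≤ (p' + 1) * _ + 1 := this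
                _ ≤ (p' + 1) * (q + 1) + 1 := by
                    have := Nat.mul_le_mul_left (p' + 1) hcard; omega
            omega
        · intro i j
          by_cases hi : (i : ℕ) < p' + 1
          · simp only [dif_pos hi]
            exact hcA _ _
          · simp only [dif_neg hi]
            have h1 : c j ≤ c (Fin.last q) := hc.monotone (Fin.le_last j)
            have hcard : ((Finset.univ.filter
                (fun j : Fin (q + 1) => c j ≤ r (Fin.last (p' + 1)))).card) ≤ q + 1 := by
              have := Finset.card_filter_le (Finset.univ : Finset (Fin (q + 1)))
                (fun j => c j ≤ r (Fin.last (p' + 1)))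
              simpa using this
            have := hB (Fin.last (p' + 1))
            have hlastval : ((Fin.last (p' + 1) : Fin (p' + 2)) : ℕ) = p' + 1 := rfl
            rw [hlastval] at this
            have hbound : r (Fin.last (p' + 1)) ≤ (p' + 1) * (q + 1) + 1 := by
              calc r (Fin.last (p' + 1)) ≤ (p' + 1) * _ + 1 := this
                _ ≤ (p' + 1) * (q + 1) + 1 := by
                    have := Nat.mul_le_mul_left (p' + 1) hcard; omega
            omega
    · -- peel a column; here r last < c last, so q > 0
      push_neg at hcr
      match q, c, hc, hc0, hC, hcr, hN with
      | 0, c, hc, hc0, hC, hcr, hN =>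
        exfalso
        have hlast0 : (Fin.last 0 : Fin 1) = 0 := rfl
        rw [hlast0, hc0] at hcr
        have : 1 ≤ r (Fin.last p) := hr0 ▸ hr.monotone (Fin.zero_le _)
        omega
      | q' + 1, c, hc, hc0, hC, hcr, hN =>
        set c' : Fin (q' + 1) → ℕ := fun j => c j.castSucc with hc'def
        have hc'mono : StrictMono c' := fun a b hab =>
          hc (Fin.castSucc_lt_castSucc_iff.mpr hab)
        have hc'0 : c' 0 = 1 := by
          rw [hc'def]; simpa using hc0
        have hcle : ∀ j : Fin (q' + 2), c j ≤ c (Fin.last (q' + 1)) :=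
          fun j => hc.monotone (Fin.le_last j)
        have hC' : ∀ j : Fin (q' + 1),
            c' j ≤ (j : ℕ) * ((Finset.univ.filter (fun i : Fin (p + 1) => r i < c' j)).card) + 1 := by
          intro j
          have := hC j.castSucc
          simpa [hc'def] using this
        have hB' : ∀ i : Fin (p + 1),
            r i ≤ (i : ℕ) * ((Finset.univ.filter (fun j : Fin (q' + 1) => c' j ≤ r i)).card) + 1 := by
          intro i
          have hnot : ¬ (c (Fin.last (q' + 1)) ≤ r i) := by
            have : r i ≤ r (Fin.last p) := hr.monotone (Fin.le_last i)
            omega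
          have := hB i
          rwa [filter_card_castSucc (fun j : Fin (q' + 2) => c j ≤ r i) hnot] at this
        obtain ⟨A, hRC, hLay, hrA, hcA⟩ :=
          ih p q' r c' (by omega) hr hc'mono hr0 hc'0 hB' hC'
        have hcard : ((Finset.univ.filter
            (fun i : Fin (p + 1) => r i < c (Fin.last (q' + 1)))).card) ≤ p + 1 := by
          have := Finset.card_filter_le (Finset.univ : Finset (Fin (p + 1)))
            (fun i => r i < c (Fin.last (q' + 1)))
          simpa using this
        have hClast := hC (Fin.last (q' + 1))
        have hlastval : ((Fin.last (q' + 1) : Fin (q' + 2)) : ℕ) = q' + 1 := rfl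
        rw [hlastval] at hClast
        have hbound : c (Fin.last (q' + 1)) ≤ (q' + 1) * (p + 1) + 1 := by
          calc c (Fin.last (q' + 1)) ≤ (q' + 1) * _ + 1 := hClast
            _ ≤ (q' + 1) * (p + 1) + 1 := by
                have := Nat.mul_le_mul_left (q' + 1) hcard; omega
        have hmul : (p + 1) * (q' + 1) = (q' + 1) * (p + 1) := by ring
        refine ⟨_, IsRC.addCol hRC, isLayout_addCol hLay, ?_, ?_⟩
        · intro i j
          by_cases hj : (j : ℕ) < q' + 1
          · simp only [dif_pos hj]
            exact hrA _ _
          · simp only [dif_neg hj]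
            have : r i ≤ r (Fin.last p) := hr.monotone (Fin.le_last i)
            omega
        · intro i j
          by_cases hj : (j : ℕ) < q' + 1
          · simp only [dif_pos hj]
            have hjeq : j = Fin.castSucc ⟨(j : ℕ), hj⟩ := Fin.ext (by simp)
            exact le_trans (le_of_eq (congrArg c hjeq)) (hcA i ⟨(j : ℕ), hj⟩)
          · simp only [dif_neg hj]
            have h1 : c j ≤ c (Fin.last (q' + 1)) := hcle j
            omega

lemma exists_strictMono_image {m : ℕ} (f : Fin m → ℕ) (hf : Function.Injective f) :
    ∃ g : Fin m → ℕ, StrictMono g ∧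
      Finset.image g Finset.univ = Finset.image f Finset.univ := by
  have hcard : (Finset.image f Finset.univ).card = m := by
    rw [Finset.card_image_of_injective _ hf, Finset.card_univ, Fintype.card_fin]
  set er := (Finset.image f Finset.univ).orderIsoOfFin hcard with her
  refine ⟨fun i => (er i : ℕ), fun a b hab => ?_, ?_⟩
  · exact_mod_cast er.strictMono hab
  · ext x
    constructor
    · intro hx
      obtain ⟨i, -, rfl⟩ := Finset.mem_image.mp hx
      exact (er i).2
    · intro hx
      apply Finset.mem_image.mpr
      refine ⟨er.symm ⟨x, hx⟩, Finset.mem_univ _, ?_⟩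
      simp

lemma filter_card_image_eq {m : ℕ} {f g : Fin m → ℕ} (hf : Function.Injective f)
    (hg : Function.Injective g)
    (him : Finset.image g Finset.univ = Finset.image f Finset.univ)
    (P : ℕ → Prop) [DecidablePred P] :
    (Finset.univ.filter fun i => P (g i)).card = (Finset.univ.filter fun i => P (f i)).card := by
  rw [← Finset.card_image_of_injective (Finset.univ.filter fun i => P (g i)) hg,
    ← Finset.card_image_of_injective (Finset.univ.filter fun i => P (f i)) hf,
    ← Finset.filter_image, ← Finset.filter_image, him]

lemma sum_comp_image_eq {m : ℕ} {f g : Fin m → ℕ} (hf : Function.Injective f)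
    (hg : Function.Injective g)
    (him : Finset.image g Finset.univ = Finset.image f Finset.univ) (l : ℕ → ℕ) :
    ∑ i, l (g i) = ∑ i, l (f i) := by
  have h1 : ∑ x ∈ Finset.image g Finset.univ, l x = ∑ i, l (g i) :=
    Finset.sum_image (fun x _ y _ h => hg h)
  have h2 : ∑ x ∈ Finset.image f Finset.univ, l x = ∑ i, l (f i) :=
    Finset.sum_image (fun x _ y _ h => hf h)
  rw [← h1, him, h2]

lemma exists_rc_of_layout (l : ℕ → ℕ) (hl : ∀ a b, 1 ≤ a → a ≤ b → l b ≤ l a)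
    {p q : ℕ} (B : Fin (p + 1) → Fin (q + 1) → ℕ) (hB : IsLayout (p + 1) (q + 1) B) :
    ∃ A : Fin (p + 1) → Fin (q + 1) → ℕ, IsRC A ∧ IsLayout (p + 1) (q + 1) A ∧
      layW l A ≤ layW l B ∧ layH l A ≤ layH l B := by
  classical
  set M := (p + 1) * (q + 1) with hM
  have hmem : ∀ i j, 1 ≤ B i j ∧ B i j ≤ M := fun i j => isLayout_mem hB i j
  set rowmin : Fin (p + 1) → ℕ :=
    fun i => Finset.univ.inf' Finset.univ_nonempty (B i) with hrowmin
  set colmin : Fin (q + 1) → ℕ :=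
    fun j => Finset.univ.inf' Finset.univ_nonempty (fun i => B i j) with hcolmin
  have hrm_le : ∀ i j, rowmin i ≤ B i j := fun i j => Finset.inf'_le _ (Finset.mem_univ j)
  have hcm_le : ∀ i j, colmin j ≤ B i j := fun i j => Finset.inf'_le _ (Finset.mem_univ i)
  have hrm_ex : ∀ i, ∃ j, rowmin i = B i j := by
    intro i
    obtain ⟨j, -, hj⟩ := Finset.exists_mem_eq_inf' Finset.univ_nonempty (B i)
    exact ⟨j, hj⟩
  have hcm_ex : ∀ j, ∃ i, colmin j = B i j := by
    intro j
    obtain ⟨i, -, hi⟩ := Finset.exists_mem_eq_inf' Finset.univ_nonempty (fun i => B i j)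
    exact ⟨i, hi⟩
  have hrm_pos : ∀ i, 1 ≤ rowmin i := by
    intro i; obtain ⟨j, hj⟩ := hrm_ex i; rw [hj]; exact (hmem i j).1
  have hcm_pos : ∀ j, 1 ≤ colmin j := by
    intro j; obtain ⟨i, hi⟩ := hcm_ex j; rw [hi]; exact (hmem i j).1
  have hrm_bd : ∀ i, rowmin i ≤ M := by
    intro i; obtain ⟨j, hj⟩ := hrm_ex i; rw [hj]; exact (hmem i j).2
  have hrm_inj : Function.Injective rowmin := by
    intro i1 i2 h12
    obtain ⟨j1, hj1⟩ := hrm_ex i1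
    obtain ⟨j2, hj2⟩ := hrm_ex i2
    have : B i1 j1 = B i2 j2 := by rw [← hj1, ← hj2, h12]
    have := hB.1 (a₁ := (i1, j1)) (a₂ := (i2, j2)) this
    exact congrArg Prod.fst this
  have hcm_inj : Function.Injective colmin := by
    intro j1 j2 h12
    obtain ⟨i1, hi1⟩ := hcm_ex j1
    obtain ⟨i2, hi2⟩ := hcm_ex j2
    have : B i1 j1 = B i2 j2 := by rw [← hi1, ← hi2, h12]
    have := hB.1 (a₁ := (i1, j1)) (a₂ := (i2, j2)) this
    exact congrArg Prod.snd this
  obtain ⟨r, hr_mono, hr_im⟩ := exists_strictMono_image rowmin hrm_inj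
  obtain ⟨c, hc_mono, hc_im⟩ := exists_strictMono_image colmin hcm_inj
  have hr_mem : ∀ i, ∃ i', r i = rowmin i' := by
    intro i
    have : r i ∈ Finset.image rowmin Finset.univ := by
      rw [← hr_im]; exact Finset.mem_image_of_mem r (Finset.mem_univ i)
    obtain ⟨i', -, h⟩ := Finset.mem_image.mp this
    exact ⟨i', h.symm⟩
  have hc_mem : ∀ j, ∃ j', c j = colmin j' := by
    intro j
    have : c j ∈ Finset.image colmin Finset.univ := by
      rw [← hc_im]; exact Finset.mem_image_of_mem c (Finset.mem_univ j)
    obtain ⟨j', -, h⟩ := Finset.mem_image.mp this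
    exact ⟨j', h.symm⟩
  have hr_pos : ∀ i, 1 ≤ r i := by
    intro i; obtain ⟨i', h⟩ := hr_mem i; rw [h]; exact hrm_pos i'
  have hc_pos : ∀ j, 1 ≤ c j := by
    intro j; obtain ⟨j', h⟩ := hc_mem j; rw [h]; exact hcm_pos j'
  have hr_bd : ∀ i, r i ≤ M := by
    intro i; obtain ⟨i', h⟩ := hr_mem i; rw [h]; exact hrm_bd i'
  have hM1 : 1 ≤ M := by rw [hM]; exact Nat.succ_le_of_lt (Nat.mul_pos (Nat.succ_pos p) (Nat.succ_pos q))
  -- r 0 = 1 and c 0 = 1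
  obtain ⟨⟨i1, j1⟩, hij1'⟩ := isLayout_surj hB (e := 1) le_rfl hM1
  have hij1 : B i1 j1 = 1 := hij1'
  have hrm1 : rowmin i1 = 1 := by
    have := hrm_le i1 j1; have := hrm_pos i1; have := hij1
    omega
  have hcm1 : colmin j1 = 1 := by
    have := hcm_le i1 j1; have := hcm_pos j1; have := hij1
    omega
  have hr0 : r 0 = 1 := by
    have h1 : (1 : ℕ) ∈ Finset.image r Finset.univ := by
      rw [hr_im]
      have : rowmin i1 ∈ Finset.image rowmin Finset.univ :=
        Finset.mem_image_of_mem rowmin (Finset.mem_univ i1)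
      rwa [hrm1] at this
    obtain ⟨i0, -, hi0⟩ := Finset.mem_image.mp h1
    have h2 : r 0 ≤ r i0 := hr_mono.monotone (Fin.zero_le i0)
    have h3 := hr_pos 0
    omega
  have hc0 : c 0 = 1 := by
    have h1 : (1 : ℕ) ∈ Finset.image c Finset.univ := by
      rw [hc_im]
      have : colmin j1 ∈ Finset.image colmin Finset.univ :=
        Finset.mem_image_of_mem colmin (Finset.mem_univ j1)
      rwa [hcm1] at this
    obtain ⟨j0, -, hj0⟩ := Finset.mem_image.mp h1
    have h2 : c 0 ≤ c j0 := hc_mono.monotone (Fin.zero_le j0)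
    have h3 := hc_pos 0
    omega
  -- rank facts
  have hrank : ∀ i : Fin (p + 1),
      (Finset.univ.filter fun i' => r i' < r i).card = (i : ℕ) := by
    intro i
    have : (Finset.univ.filter fun i' => r i' < r i) = Finset.Iio i := by
      ext i'
      simp [hr_mono.lt_iff_lt]
    rw [this, Fin.card_Iio]
  have hrankc : ∀ j : Fin (q + 1),
      (Finset.univ.filter fun j' => c j' < c j).card = (j : ℕ) := by
    intro j
    have : (Finset.univ.filter fun j' => c j' < c j) = Finset.Iio j := by
      ext j'
      simp [hc_mono.lt_iff_lt]
    rw [this, Fin.card_Iio]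
  -- the counting bound
  have hcount : ∀ x : ℕ, x ≤ M →
      x - 1 ≤ (Finset.univ.filter fun i => rowmin i < x).card *
        (Finset.univ.filter fun j => colmin j < x).card := by
    intro x hxM
    have hsurj : ∀ e : ℕ, ∃ ij : Fin (p + 1) × Fin (q + 1),
        1 ≤ e → e ≤ x - 1 → B ij.1 ij.2 = e := by
      intro e
      by_cases he : 1 ≤ e ∧ e ≤ x - 1
      · obtain ⟨ij, hij⟩ := isLayout_surj hB he.1 (by omega)
        exact ⟨ij, fun _ _ => hij⟩
      · exact ⟨(0, 0), fun h1 h2 => absurd ⟨h1, h2⟩ he⟩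
    choose F hF using hsurj
    have hle := Finset.card_le_card_of_injOn F
      (s := Finset.Icc 1 (x - 1))
      (t := (Finset.univ.filter fun i => rowmin i < x) ×ˢ
        (Finset.univ.filter fun j => colmin j < x))
      (by
        intro e he
        rw [Finset.mem_coe, Finset.mem_Icc] at he
        have hBe := hF e he.1 he.2
        rw [Finset.mem_coe, Finset.mem_product, Finset.mem_filter, Finset.mem_filter]
        have h1 : rowmin (F e).1 ≤ e := by
          calc rowmin (F e).1 ≤ B (F e).1 (F e).2 := hrm_le _ _
            _ = e := hBe
        have h2 : colmin (F e).2 ≤ e := by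
          calc colmin (F e).2 ≤ B (F e).1 (F e).2 := hcm_le _ _
            _ = e := hBe
        exact ⟨⟨Finset.mem_univ _, by omega⟩, ⟨Finset.mem_univ _, by omega⟩⟩)
      (by
        intro e1 he1 e2 he2 heq
        rw [Finset.coe_Icc, Set.mem_Icc] at he1 he2
        have h1 := hF e1 he1.1 he1.2
        have h2 := hF e2 he2.1 he2.2
        rw [heq] at h1
        omega)
    rw [Nat.card_Icc, Finset.card_product] at hle
    omega
  have hcm_bd : ∀ j, colmin j ≤ M := by
    intro j; obtain ⟨i, hi⟩ := hcm_ex j; rw [hi]; exact (hmem i j).2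
  have hc_bd : ∀ j, c j ≤ M := by
    intro j; obtain ⟨j', h⟩ := hc_mem j; rw [h]; exact hcm_bd j'
  have hB' : ∀ i : Fin (p + 1),
      r i ≤ (i : ℕ) * ((Finset.univ.filter (fun j : Fin (q + 1) => c j ≤ r i)).card) + 1 := by
    intro i
    have hx1 : 1 ≤ r i := hr_pos i
    have h0 := hcount (r i) (hr_bd i)
    have e1 : (Finset.univ.filter fun i' => r i' < r i).card
        = (Finset.univ.filter fun i' => rowmin i' < r i).card :=
      filter_card_image_eq hrm_inj hr_mono.injective hr_im (fun y => y < r i)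
    have e2 : (Finset.univ.filter fun j' => c j' < r i).card
        = (Finset.univ.filter fun j' => colmin j' < r i).card :=
      filter_card_image_eq hcm_inj hc_mono.injective hc_im (fun y => y < r i)
    rw [← e1, ← e2, hrank i] at h0
    have e3 : (Finset.univ.filter fun j' => c j' < r i).card
        ≤ (Finset.univ.filter fun j' => c j' ≤ r i).card :=
      Finset.card_le_card (Finset.monotone_filter_right _ (fun j _ h => le_of_lt h))
    have e4 := Nat.mul_le_mul_left (i : ℕ) e3
    omega
  have hC' : ∀ j : Fin (q + 1),
      c j ≤ (j : ℕ) * ((Finset.univ.filter (fun i : Fin (p + 1) => r i < c j)).card) + 1 := by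
    intro j
    have hx1 : 1 ≤ c j := hc_pos j
    have h0 := hcount (c j) (hc_bd j)
    have e1 : (Finset.univ.filter fun i' => r i' < c j).card
        = (Finset.univ.filter fun i' => rowmin i' < c j).card :=
      filter_card_image_eq hrm_inj hr_mono.injective hr_im (fun y => y < c j)
    have e2 : (Finset.univ.filter fun j' => c j' < c j).card
        = (Finset.univ.filter fun j' => colmin j' < c j).card :=
      filter_card_image_eq hcm_inj hc_mono.injective hc_im (fun y => y < c j)
    rw [← e1, ← e2, hrankc j] at h0
    rw [Nat.mul_comm] at h0
    omega
  obtain ⟨A, hRC, hLay, hrA, hcA⟩ :=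
    rc_build (p + q) p q r c le_rfl hr_mono hc_mono hr0 hc0 hB' hC'
  refine ⟨A, hRC, hLay, ?_, ?_⟩
  · have h1 : layW l A ≤ ∑ j, l (c j) := by
      refine Finset.sum_le_sum ?_
      intro j _
      exact Finset.sup_le (fun i _ => hl (c j) (A i j) (hc_pos j) (hcA i j))
    have h2 : ∑ j, l (c j) = ∑ j, l (colmin j) :=
      sum_comp_image_eq hcm_inj hc_mono.injective hc_im l
    have h3 : layW l B = ∑ j, l (colmin j) := by
      refine Finset.sum_congr rfl ?_
      intro j _
      apply le_antisymm
      · exact Finset.sup_le (fun i _ => hl (colmin j) (B i j) (hcm_pos j) (hcm_le i j))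
      · obtain ⟨i0, hi0⟩ := hcm_ex j
        rw [hi0]
        exact Finset.le_sup (f := fun i => l (B i j)) (Finset.mem_univ i0)
    omega
  · have h1 : layH l A ≤ ∑ i, l (r i) := by
      refine Finset.sum_le_sum ?_
      intro i _
      exact Finset.sup_le (fun j _ => hl (r i) (A i j) (hr_pos i) (hrA i j))
    have h2 : ∑ i, l (r i) = ∑ i, l (rowmin i) :=
      sum_comp_image_eq hrm_inj hr_mono.injective hr_im l
    have h3 : layH l B = ∑ i, l (rowmin i) := by
      refine Finset.sum_congr rfl ?_
      intro i _
      apply le_antisymm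
      · exact Finset.sup_le (fun j _ => hl (rowmin i) (B i j) (hrm_pos i) (hrm_le i j))
      · obtain ⟨j0, hj0⟩ := hrm_ex i
        rw [hj0]
        exact Finset.le_sup (f := fun j => l (B i j)) (Finset.mem_univ j0)
    omega

/-- If the SIPP instance has any feasible layout, then there is an RC
feasible layout whose height equals the minimum height over all feasible layouts. -/
theorem rc_layout_optimal (n b : ℕ) (l : ℕ → ℕ)
    (hmono : ∀ a c, 1 ≤ a → a ≤ c → c ≤ n → l c ≤ l a)
    (hpos : ∀ k, 1 ≤ k → k ≤ n → 0 < l k)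
    (hzero : ∀ k, n < k → l k = 0)
    (hfeas : ∃ (p q : ℕ) (A : Fin p → Fin q → ℕ),
      n ≤ p * q ∧ IsLayout p q A ∧ layW l A ≤ b) :
    ∃ (p q : ℕ) (A : Fin p → Fin q → ℕ),
      n ≤ p * q ∧ IsLayout p q A ∧ IsRC A ∧ layW l A ≤ b ∧
      ∀ (p' q' : ℕ) (B : Fin p' → Fin q' → ℕ),
        n ≤ p' * q' → IsLayout p' q' B → layW l B ≤ b → layH l A ≤ layH l B := by
  classical
  by_cases hn : n = 0
  · subst hn
    refine ⟨1, 1, (fun _ _ => 1), by norm_num, isLayout_base, IsRC.base, ?_, ?_⟩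
    · have hl1 : l 1 = 0 := hzero 1 (by norm_num)
      have : layW l (fun (_ : Fin 1) (_ : Fin 1) => 1) = 0 := by
        simp [layW, hl1]
      omega
    · intro p' q' B _ _ _
      have hl1 : l 1 = 0 := hzero 1 (by norm_num)
      have : layH l (fun (_ : Fin 1) (_ : Fin 1) => 1) = 0 := by
        simp [layH, hl1]
      omega
  · have hl' : ∀ a c, 1 ≤ a → a ≤ c → l c ≤ l a := by
      intro a c ha hac
      by_cases hcn : c ≤ n
      · exact hmono a c ha hac hcn
      · rw [hzero c (by omega)]; exact Nat.zero_le _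
    set P : ℕ → Prop := fun h => ∃ (p q : ℕ) (A : Fin p → Fin q → ℕ),
      n ≤ p * q ∧ IsLayout p q A ∧ layW l A ≤ b ∧ layH l A = h with hP
    have hPne : ∃ h, P h := by
      obtain ⟨p, q, A, h1, h2, h3⟩ := hfeas
      exact ⟨layH l A, p, q, A, h1, h2, h3, rfl⟩
    have hPh : P (Nat.find hPne) := Nat.find_spec hPne
    have hmin : ∀ h', P h' → Nat.find hPne ≤ h' := fun h' hh' => Nat.find_min' hPne hh'
    obtain ⟨p, q, Bm, hnpq, hLay, hWb, hHm⟩ := hPh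
    have hp : p ≠ 0 := by rintro rfl; omega
    have hq : q ≠ 0 := by
      rintro rfl
      rw [Nat.mul_zero] at hnpq
      omega
    obtain ⟨p', rfl⟩ := Nat.exists_eq_succ_of_ne_zero hp
    obtain ⟨q', rfl⟩ := Nat.exists_eq_succ_of_ne_zero hq
    obtain ⟨A, hRC, hLayA, hWA, hHA⟩ := exists_rc_of_layout l hl' Bm hLay
    refine ⟨p' + 1, q' + 1, A, hnpq, hLayA, hRC, le_trans hWA hWb, ?_⟩
    intro p2 q2 B2 h1 h2 h3
    have h4 : Nat.find hPne ≤ layH l B2 := hmin _ ⟨p2, q2, B2, h1, h2, h3, rfl⟩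
    omega
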